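/- Let k be a difference field and R a k-σ-algebra. If R₁ and R₂ are strongly σ-étale k-σ-subalgebras of R, then the compositum R₁R₂ (the k-subalgebra generated by R₁ and R₂, which is a σ-subalgebra) is strongly σ-étale over k. Consequently the union π₀^σ(R) of all strongly σ-étale k-σ-subalgebras of R is a k-σ-subalgebra of R. -/

import Mathlib

open TensorProduct

/-- The diagonal endomorphism `σ(a ⊗ b) = σ(a) ⊗ σ(b)` of `A ⊗_k B` is injective
(i.e. `A ⊗_k B` is σ-reduced): any ring endomorphism satisfying the defining rule
on pure tensors is injective. -/
def SigmaReducedTensor (k A B : Type) [CommRing k] [CommRing A] [CommRing B]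
    [Algebra k A] [Algebra k B] (σA : A →+* A) (σB : B →+* B) : Prop :=
  ∀ τ : (A ⊗[k] B) →+* A ⊗[k] B,
    (∀ (a : A) (b : B), τ (a ⊗ₜ[k] b) = σA a ⊗ₜ[k] σB b) → Function.Injective τ

/-- A `k`-σ-algebra `R` is σ-separable over `k` if `R ⊗_k K` is σ-reduced for
every difference field extension `K` of `k`. -/
def IsSigmaSeparable (k R : Type) [Field k] [CommRing R] [Algebra k R]
    (σk : k →+* k) (σR : R →+* R) : Prop :=
  ∀ (K : Type) [Field K] [Algebra k K], ∀ σK : K →+* K,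
    (∀ x : k, σK (algebraMap k K x) = algebraMap k K (σk x)) →
    SigmaReducedTensor k K R σK σR

/-- A `k`-algebra is étale if its base change to the algebraic closure of `k`
is a finite product of copies of the algebraic closure. -/
def IsEtaleAlgebra (k R : Type) [Field k] [CommRing R] [Algebra k R] : Prop :=
  ∃ n : ℕ, Nonempty ((AlgebraicClosure k ⊗[k] R) ≃ₐ[AlgebraicClosure k]
    (Fin n → AlgebraicClosure k))

/-- A σ-stable subalgebra that is strongly σ-étale over `k`. -/
def IsStronglySigmaEtaleSubalgebra (k R : Type) [Field k] [CommRing R] [Algebra k R]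
    (σk : k →+* k) (σR : R →+* R) (A : Subalgebra k R) : Prop :=
  ∃ h : ∀ x ∈ A, σR x ∈ A,
    IsEtaleAlgebra k A ∧ IsSigmaSeparable k A σk (σR.restrict A A h)


set_option linter.unusedSectionVars false
set_option maxHeartbeats 1000000




section PiField

variable {I : Type} [Fintype I] [DecidableEq I] {Ω : Type} [Field Ω]

private lemma single_mul_single_same (v : I) (a b : Ω) :
    (Pi.single v a : I → Ω) * Pi.single v b = Pi.single v (a * b) := by
  funext j
  simp only [Pi.mul_apply, Pi.single_apply]
  split_ifs <;> simp

private lemma single_mul_single_ne {v w : I} (h : v ≠ w) (a b : Ω) :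
    (Pi.single v a : I → Ω) * Pi.single w b = 0 := by
  funext j
  simp only [Pi.mul_apply, Pi.single_apply, Pi.zero_apply]
  split_ifs with h1 h2
  · exact absurd (h1.symm.trans h2) h
  · simp
  · simp
  · simp

/-- Every ring endomorphism of a finite product of copies of a field `Ω` has a
"support map" `t` with `Θ x u = 0 ↔ x (t u) = 0`. -/
lemma pi_endo_exists_t (Θ : (I → Ω) →+* (I → Ω)) :
    ∃ t : I → I, ∀ (x : I → Ω) (u : I), Θ x u = 0 ↔ x (t u) = 0 := by
  have hmain : ∀ u : I, ∃ v : I, ∀ x : I → Ω, Θ x u = 0 ↔ x v = 0 := by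
    intro u
    have hsum : (∑ v : I, Θ (Pi.single v 1) u) = 1 := by
      have h1 : (∑ v : I, (Pi.single v (1:Ω) : I → Ω)) = 1 := by
        have := Finset.univ_sum_single (1 : I → Ω)
        simpa using this
      calc (∑ v : I, Θ (Pi.single v 1) u) = Θ (∑ v : I, Pi.single v 1) u := by
            rw [map_sum]; simp [Finset.sum_apply]
        _ = 1 := by rw [h1, map_one]; simp
    have hex : ∃ v : I, Θ (Pi.single v 1) u ≠ 0 := by
      by_contra h
      push_neg at h
      rw [Finset.sum_eq_zero (fun v _ => h v)] at hsum
      exact zero_ne_one hsum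
    obtain ⟨v, hv⟩ := hex
    have hone : Θ (Pi.single v 1) u = 1 := by
      have hidem : Θ (Pi.single v 1) u * Θ (Pi.single v 1) u = 1 * Θ (Pi.single v 1) u := by
        rw [← Pi.mul_apply, ← map_mul, single_mul_single_same, one_mul, one_mul]
      exact mul_right_cancel₀ hv hidem
    refine ⟨v, fun x => ?_⟩
    have key : Θ x u = Θ (x * Pi.single v 1) u := by
      rw [map_mul, Pi.mul_apply, hone, mul_one]
    constructor
    · intro h0
      by_contra hxv
      have hmul : (x * Pi.single v 1) * Pi.single v (x v)⁻¹ = Pi.single v 1 := by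
        funext j
        simp only [Pi.mul_apply, Pi.single_apply]
        split_ifs with hj
        · subst hj; simp [mul_inv_cancel₀ hxv]
        · simp
      have hz : Θ (Pi.single v 1) u = 0 := by
        rw [← hmul, map_mul, Pi.mul_apply, ← key, h0, zero_mul]
      rw [hone] at hz
      exact one_ne_zero hz
    · intro hxv
      have hz : x * Pi.single v 1 = 0 := by
        funext j
        simp only [Pi.mul_apply, Pi.single_apply, Pi.zero_apply]
        split_ifs with hj
        · subst hj; simp [hxv]
        · simp
      rw [key, hz, map_zero]
      simp
  choose t ht using hmain
  exact ⟨t, fun x u => ht u x⟩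

lemma pi_endo_injective_of_surjective (Θ : (I → Ω) →+* (I → Ω)) {t : I → I}
    (ht : ∀ (x : I → Ω) (u : I), Θ x u = 0 ↔ x (t u) = 0)
    (hts : Function.Surjective t) : Function.Injective Θ := by
  rw [injective_iff_map_eq_zero]
  intro x hx
  funext j
  obtain ⟨u, rfl⟩ := hts j
  exact (ht x u).mp (by rw [hx]; rfl)

lemma pi_endo_surjective_of_injective (Θ : (I → Ω) →+* (I → Ω)) {t : I → I}
    (ht : ∀ (x : I → Ω) (u : I), Θ x u = 0 ↔ x (t u) = 0)
    (hinj : Function.Injective Θ) : Function.Surjective t := by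
  intro v
  by_contra h
  push_neg at h
  have h0 : Θ (Pi.single v 1) = 0 := by
    funext u
    refine (ht _ u).mpr ?_
    have hne : t u ≠ v := h u
    simp [Pi.single_apply, hne]
  have := hinj (a₁ := Pi.single v 1) (a₂ := 0) (by rw [h0, map_zero])
  have h1 := congrFun this v
  simp at h1

/-- Membership criterion for ideals in a finite product of fields. -/
lemma pi_ideal_mem (J : Ideal (I → Ω)) (x : I → Ω)
    (hx : ∀ u : I, (∀ y ∈ J, y u = 0) → x u = 0) : x ∈ J := by
  have hrep : x = ∑ u : I, Pi.single u (x u) := (Finset.univ_sum_single x).symm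
  rw [hrep]
  refine Submodule.sum_mem J (fun u _ => ?_)
  by_cases hu : ∀ y ∈ J, y u = 0
  · rw [hx u hu]; simp
  · push_neg at hu
    obtain ⟨y, hyJ, hyu⟩ := hu
    have heq : Pi.single u (x u) = y * Pi.single u ((y u)⁻¹ * x u) := by
      funext j
      simp only [Pi.mul_apply, Pi.single_apply]
      split_ifs with hj
      · subst hj; rw [← mul_assoc, mul_inv_cancel₀ hyu, one_mul]
      · simp
    rw [heq]
    exact Ideal.mul_mem_right _ _ hyJ

/-- The key saturation lemma: a stable ideal under an injective endomorphism of a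
finite product of fields is saturated. -/
lemma pi_key (Θ : (I → Ω) →+* (I → Ω)) (hinj : Function.Injective Θ)
    (J : Ideal (I → Ω)) (hJ : ∀ x ∈ J, Θ x ∈ J) :
    ∀ x : I → Ω, Θ x ∈ J → x ∈ J := by
  obtain ⟨t, ht⟩ := pi_endo_exists_t Θ
  have hts : Function.Surjective t := pi_endo_surjective_of_injective Θ ht hinj
  have hti : Function.Injective t := Finite.injective_iff_surjective.mpr hts
  set T : Set I := {u | ∀ y ∈ J, y u = 0} with hT
  have hmaps : ∀ u ∈ T, t u ∈ T := by
    intro u hu y hy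
    exact (ht y u).mp (hu (Θ y) (hJ y hy))
  have himg : t '' T = T := by
    apply Set.eq_of_subset_of_ncard_le
    · rintro _ ⟨u, hu, rfl⟩; exact hmaps u hu
    · rw [Set.ncard_image_of_injective T hti]
    · exact Set.toFinite T
  intro x hxJ
  apply pi_ideal_mem J x
  intro u hu
  have hmem : u ∈ t '' T := himg.symm ▸ hu
  obtain ⟨w, hwT, rfl⟩ := hmem
  exact (ht x w).mp (hwT (Θ x) hxJ)

end PiField


section Twist

variable {k : Type} [Field k] (σk : k →+* k)
variable {A A' B B' : Type} [CommRing A] [CommRing A'] [CommRing B] [CommRing B']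
  [Algebra k A] [Algebra k A'] [Algebra k B] [Algebra k B']

variable (φ : A →+* A') (ψ : B →+* B')

/-- Underlying additive map of the twisted tensor product of two `σk`-semilinear
ring homomorphisms. -/
noncomputable def tthAdd
    (hφ : ∀ x : k, φ (algebraMap k A x) = algebraMap k A' (σk x))
    (hψ : ∀ x : k, ψ (algebraMap k B x) = algebraMap k B' (σk x)) :
    A ⊗[k] B →+ A' ⊗[k] B' :=
  TensorProduct.liftAddHom
    (AddMonoidHom.mk' (fun a => AddMonoidHom.mk' (fun b => φ a ⊗ₜ[k] ψ b)
        (fun b₁ b₂ => by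
          show φ a ⊗ₜ[k] ψ (b₁ + b₂) = φ a ⊗ₜ[k] ψ b₁ + φ a ⊗ₜ[k] ψ b₂
          rw [map_add, tmul_add]))
      (fun a₁ a₂ => by
        ext b
        show φ (a₁ + a₂) ⊗ₜ[k] ψ b = φ a₁ ⊗ₜ[k] ψ b + φ a₂ ⊗ₜ[k] ψ b
        rw [map_add, add_tmul]))
    (fun r a b => by
      simp only [AddMonoidHom.mk'_apply]
      rw [Algebra.smul_def, Algebra.smul_def, map_mul, map_mul, hφ r, hψ r]
      rw [← Algebra.smul_def, ← Algebra.smul_def, smul_tmul])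

lemma tthAdd_tmul (hφ) (hψ) (a : A) (b : B) :
    tthAdd σk φ ψ hφ hψ (a ⊗ₜ[k] b) = φ a ⊗ₜ[k] ψ b := rfl

/-- The twisted tensor product of two `σk`-semilinear ring homomorphisms. -/
noncomputable def tth
    (hφ : ∀ x : k, φ (algebraMap k A x) = algebraMap k A' (σk x))
    (hψ : ∀ x : k, ψ (algebraMap k B x) = algebraMap k B' (σk x)) :
    A ⊗[k] B →+* A' ⊗[k] B' where
  toFun := tthAdd σk φ ψ hφ hψ
  map_one' := by
    rw [Algebra.TensorProduct.one_def, tthAdd_tmul, map_one, map_one,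
      ← Algebra.TensorProduct.one_def]
  map_mul' := fun z w => by
    induction z using TensorProduct.induction_on with
    | zero => simp
    | tmul a b =>
      induction w using TensorProduct.induction_on with
      | zero => simp
      | tmul a' b' =>
        simp only [Algebra.TensorProduct.tmul_mul_tmul, tthAdd_tmul, map_mul]
      | add w₁ w₂ h₁ h₂ => rw [mul_add, map_add, map_add, mul_add, h₁, h₂]
    | add z₁ z₂ h₁ h₂ => rw [add_mul, map_add, map_add, add_mul, h₁, h₂]
  map_zero' := map_zero _
  map_add' := map_add _

@[simp] lemma tth_tmul (hφ) (hψ) (a : A) (b : B) :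
    tth σk φ ψ hφ hψ (a ⊗ₜ[k] b) = φ a ⊗ₜ[k] ψ b := rfl

end Twist


section LinHelp

lemma bij_of_surj {Ω V W : Type} [Field Ω] [AddCommGroup V] [AddCommGroup W]
    [Module Ω V] [Module Ω W] [FiniteDimensional Ω V] (f : V →ₗ[Ω] W)
    (h : Module.finrank Ω V = Module.finrank Ω W) (hs : Function.Surjective f) :
    Function.Injective f := by
  have hr : LinearMap.range f = ⊤ := LinearMap.range_eq_top.mpr hs
  haveI : FiniteDimensional Ω W := Module.Finite.of_surjective f hs
  have h1 := LinearMap.finrank_range_add_finrank_ker f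
  rw [hr, finrank_top] at h1
  have h2 : Module.finrank Ω ↥(LinearMap.ker f) = 0 := by omega
  exact LinearMap.ker_eq_bot.mp (Submodule.finrank_eq_zero.mp h2)

lemma dim_of_baseChange_pi {k Ω A : Type} [Field k] [Field Ω] [Algebra k Ω]
    [CommRing A] [Algebra k A] {n : ℕ} (α : (Ω ⊗[k] A) ≃ₐ[Ω] (Fin n → Ω)) :
    FiniteDimensional k A ∧ Module.finrank k A = n := by
  let b := Module.Free.chooseBasis k A
  haveI : FiniteDimensional Ω (Ω ⊗[k] A) :=
    Module.Finite.equiv α.symm.toLinearEquiv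
  let bΩ := b.baseChange Ω
  haveI : Fintype (Module.Free.ChooseBasisIndex k A) := FiniteDimensional.fintypeBasisIndex bΩ
  have hcard : Fintype.card (Module.Free.ChooseBasisIndex k A) = n := by
    have h1 : Module.finrank Ω (Ω ⊗[k] A) = Fintype.card (Module.Free.ChooseBasisIndex k A) :=
      Module.finrank_eq_card_basis bΩ
    have h2 : Module.finrank Ω (Ω ⊗[k] A) = n := by
      rw [α.toLinearEquiv.finrank_eq, Module.finrank_pi, Fintype.card_fin]
    omega
  haveI fd : FiniteDimensional k A := Module.Finite.of_basis b
  exact ⟨fd, by rw [Module.finrank_eq_card_basis b, hcard]⟩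

lemma fd_baseChange {k Ω A : Type} [Field k] [Field Ω] [Algebra k Ω]
    [CommRing A] [Algebra k A] [FiniteDimensional k A] :
    FiniteDimensional Ω (Ω ⊗[k] A) ∧
      Module.finrank Ω (Ω ⊗[k] A) = Module.finrank k A := by
  let b := Module.finBasis k A
  let bΩ := b.baseChange Ω
  haveI : FiniteDimensional Ω (Ω ⊗[k] A) := Module.Finite.of_basis bΩ
  exact ⟨this, by rw [Module.finrank_eq_card_basis bΩ, Fintype.card_fin]⟩

end LinHelp

section Adj

/-- If `S` contains the image of all `1 ⊗ a` under an `Ω`-algebra iso out of `Ω ⊗[k] A`,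
then `S` is everything. -/
lemma mem_of_baseChange_gen {k Ω A W : Type} [Field k] [Field Ω] [Algebra k Ω]
    [CommRing A] [Algebra k A] [CommRing W] [Algebra Ω W]
    (α : (Ω ⊗[k] A) ≃ₐ[Ω] W) (S : Subalgebra Ω W)
    (hS : ∀ a : A, α ((1:Ω) ⊗ₜ[k] a) ∈ S) (w : W) : w ∈ S := by
  have htop : ∀ z : Ω ⊗[k] A,
      z ∈ Algebra.adjoin Ω (Set.range (fun a : A => (1:Ω) ⊗ₜ[k] a)) := by
    intro z
    induction z using TensorProduct.induction_on with
    | zero => exact zero_mem _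
    | tmul ω a =>
      have h : ω ⊗ₜ[k] a = ω • ((1:Ω) ⊗ₜ[k] a) := by
        rw [smul_tmul', smul_eq_mul, mul_one]
      rw [h]
      exact Subalgebra.smul_mem _ (Algebra.subset_adjoin (Set.mem_range_self a)) ω
    | add x y hx hy => exact add_mem hx hy
  have hsub : Algebra.adjoin Ω (Set.range (fun a : A => (1:Ω) ⊗ₜ[k] a)) ≤
      S.comap α.toAlgHom :=
    Algebra.adjoin_le (by rintro _ ⟨a, rfl⟩; exact hS a)
  have hmem := hsub (htop (α.symm w))
  rw [Subalgebra.mem_comap] at hmem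
  simpa using hmem

end Adj

section MasterPsi

variable {k Ω A₁ A₂ : Type} [Field k] [Field Ω] [Algebra k Ω]
  [CommRing A₁] [CommRing A₂] [Algebra k A₁] [Algebra k A₂] {n m : ℕ}

noncomputable def psiHom (α : (Ω ⊗[k] A₁) ≃ₐ[Ω] (Fin n → Ω))
    (β : (Ω ⊗[k] A₂) ≃ₐ[Ω] (Fin m → Ω)) :
    (Ω ⊗[k] (A₁ ⊗[k] A₂)) →ₐ[Ω] (Fin n × Fin m → Ω) :=
  Algebra.TensorProduct.lift (Algebra.ofId Ω _)
    (Algebra.TensorProduct.productMap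
      (((Pi.algHom Ω _ (fun p : Fin n × Fin m => Pi.evalAlgHom Ω (fun _ : Fin n => Ω) p.1)).restrictScalars k).comp
        ((α.toAlgHom.restrictScalars k).comp Algebra.TensorProduct.includeRight))
      (((Pi.algHom Ω _ (fun p : Fin n × Fin m => Pi.evalAlgHom Ω (fun _ : Fin m => Ω) p.2)).restrictScalars k).comp
        ((β.toAlgHom.restrictScalars k).comp Algebra.TensorProduct.includeRight)))
    (fun _ _ => Commute.all _ _)

lemma psiHom_tmul (α : (Ω ⊗[k] A₁) ≃ₐ[Ω] (Fin n → Ω)) (β : (Ω ⊗[k] A₂) ≃ₐ[Ω] (Fin m → Ω))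
    (ω : Ω) (a₁ : A₁) (a₂ : A₂) :
    psiHom α β (ω ⊗ₜ[k] (a₁ ⊗ₜ[k] a₂)) =
      fun p : Fin n × Fin m => ω * (α ((1:Ω) ⊗ₜ[k] a₁) p.1 * β ((1:Ω) ⊗ₜ[k] a₂) p.2) := by
  funext p
  simp [psiHom, Algebra.TensorProduct.lift_tmul, Algebra.ofId_apply]


lemma psiHom_surjective (α : (Ω ⊗[k] A₁) ≃ₐ[Ω] (Fin n → Ω))
    (β : (Ω ⊗[k] A₂) ≃ₐ[Ω] (Fin m → Ω)) : Function.Surjective (psiHom α β) := by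
  classical
  have hP1 : ∀ h0 : Fin n → Ω, (fun p : Fin n × Fin m => h0 p.1) ∈ (psiHom α β).range := by
    intro h0
    let P1 : (Fin n → Ω) →ₐ[Ω] (Fin n × Fin m → Ω) :=
      Pi.algHom Ω _ (fun p => Pi.evalAlgHom Ω (fun _ : Fin n => Ω) p.1)
    have hmem := mem_of_baseChange_gen α ((psiHom α β).range.comap P1) ?_ h0
    · rw [Subalgebra.mem_comap] at hmem
      exact hmem
    · intro a₁
      rw [Subalgebra.mem_comap]
      refine ⟨(1:Ω) ⊗ₜ[k] (a₁ ⊗ₜ[k] (1:A₂)), ?_⟩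
      show psiHom α β ((1:Ω) ⊗ₜ[k] (a₁ ⊗ₜ[k] (1:A₂))) = _
      rw [psiHom_tmul]
      funext p
      have h11 : ((1:Ω) ⊗ₜ[k] (1:A₂)) = (1 : Ω ⊗[k] A₂) :=
        (Algebra.TensorProduct.one_def).symm
      rw [h11, map_one]
      simp [P1]
  have hP2 : ∀ h0 : Fin m → Ω, (fun p : Fin n × Fin m => h0 p.2) ∈ (psiHom α β).range := by
    intro h0
    let P2 : (Fin m → Ω) →ₐ[Ω] (Fin n × Fin m → Ω) :=
      Pi.algHom Ω _ (fun p => Pi.evalAlgHom Ω (fun _ : Fin m => Ω) p.2)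
    have hmem := mem_of_baseChange_gen β ((psiHom α β).range.comap P2) ?_ h0
    · rw [Subalgebra.mem_comap] at hmem
      exact hmem
    · intro a₂
      rw [Subalgebra.mem_comap]
      refine ⟨(1:Ω) ⊗ₜ[k] (((1:A₁)) ⊗ₜ[k] a₂), ?_⟩
      show psiHom α β ((1:Ω) ⊗ₜ[k] ((1:A₁) ⊗ₜ[k] a₂)) = _
      rw [psiHom_tmul]
      funext p
      have h11 : ((1:Ω) ⊗ₜ[k] (1:A₁)) = (1 : Ω ⊗[k] A₁) :=
        (Algebra.TensorProduct.one_def).symm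
      rw [h11, map_one]
      simp [P2]
  have hsingle : ∀ (p₀ : Fin n × Fin m) (ω : Ω),
      Pi.single p₀ ω ∈ (psiHom α β).range := by
    intro p₀ ω
    have h1 := hP1 ((Pi.single p₀.1 (1:Ω) : Fin n → Ω))
    have h2 := hP2 ((Pi.single p₀.2 (1:Ω) : Fin m → Ω))
    have hω : (algebraMap Ω (Fin n × Fin m → Ω)) ω ∈ (psiHom α β).range :=
      Subalgebra.algebraMap_mem _ ω
    have heq : Pi.single p₀ ω = (algebraMap Ω (Fin n × Fin m → Ω)) ω *
        (((fun p : Fin n × Fin m => (Pi.single p₀.1 (1:Ω) : Fin n → Ω) p.1) : Fin n × Fin m → Ω) *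
         ((fun p : Fin n × Fin m => (Pi.single p₀.2 (1:Ω) : Fin m → Ω) p.2) : Fin n × Fin m → Ω)) := by
      funext p
      simp only [Pi.mul_apply, Pi.single_apply, Pi.algebraMap_apply]
      by_cases hp1 : p.1 = p₀.1 <;> by_cases hp2 : p.2 = p₀.2
      · have : p = p₀ := Prod.ext hp1 hp2
        simp [this, Algebra.algebraMap_self]
      · have : ¬ (p = p₀) := fun hh => hp2 (by rw [hh])
        simp [this, hp1, hp2]
      · have : ¬ (p = p₀) := fun hh => hp1 (by rw [hh])
        simp [this, hp1, hp2]
      · have : ¬ (p = p₀) := fun hh => hp1 (by rw [hh])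
        simp [this, hp1, hp2]
    rw [heq]
    exact mul_mem hω (mul_mem h1 h2)
  intro x
  have hx : x ∈ (psiHom α β).range := by
    have hrep : x = ∑ p : Fin n × Fin m, Pi.single p (x p) := (Finset.univ_sum_single x).symm
    rw [hrep]
    exact sum_mem (fun p _ => hsingle p (x p))
  exact hx

lemma psiHom_bijective (α : (Ω ⊗[k] A₁) ≃ₐ[Ω] (Fin n → Ω))
    (β : (Ω ⊗[k] A₂) ≃ₐ[Ω] (Fin m → Ω)) : Function.Bijective (psiHom α β) := by
  obtain ⟨fd1, h1⟩ := dim_of_baseChange_pi α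
  obtain ⟨fd2, h2⟩ := dim_of_baseChange_pi β
  haveI := fd1; haveI := fd2
  haveI fd12 : FiniteDimensional k (A₁ ⊗[k] A₂) := inferInstance
  obtain ⟨fdΩ, hrk⟩ := fd_baseChange (k := k) (Ω := Ω) (A := A₁ ⊗[k] A₂)
  haveI := fdΩ
  refine ⟨?_, psiHom_surjective α β⟩
  have hfr : Module.finrank Ω (Ω ⊗[k] (A₁ ⊗[k] A₂)) =
      Module.finrank Ω (Fin n × Fin m → Ω) := by
    rw [hrk, Module.finrank_pi, Fintype.card_prod, Fintype.card_fin, Fintype.card_fin]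
    rw [Module.finrank_tensorProduct, h1, h2]
  exact bij_of_surj (psiHom α β).toLinearMap hfr (psiHom_surjective α β)

noncomputable def psiEquiv (α : (Ω ⊗[k] A₁) ≃ₐ[Ω] (Fin n → Ω))
    (β : (Ω ⊗[k] A₂) ≃ₐ[Ω] (Fin m → Ω)) :
    (Ω ⊗[k] (A₁ ⊗[k] A₂)) ≃ₐ[Ω] (Fin n × Fin m → Ω) :=
  AlgEquiv.ofBijective (psiHom α β) (psiHom_bijective α β)

lemma psiEquiv_tmul (α : (Ω ⊗[k] A₁) ≃ₐ[Ω] (Fin n → Ω))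
    (β : (Ω ⊗[k] A₂) ≃ₐ[Ω] (Fin m → Ω)) (ω : Ω) (a₁ : A₁) (a₂ : A₂) :
    psiEquiv α β (ω ⊗ₜ[k] (a₁ ⊗ₜ[k] a₂)) =
      fun p : Fin n × Fin m => ω * (α ((1:Ω) ⊗ₜ[k] a₁) p.1 * β ((1:Ω) ⊗ₜ[k] a₂) p.2) :=
  psiHom_tmul α β ω a₁ a₂

end MasterPsi

section Quot

noncomputable def piReindexAlg (Ω : Type) [CommSemiring Ω] {I J : Type} (e : I ≃ J) :
    (I → Ω) ≃ₐ[Ω] (J → Ω) :=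
  AlgEquiv.ofAlgHom (Pi.algHom Ω _ (fun j => Pi.evalAlgHom Ω (fun _ : I => Ω) (e.symm j)))
    (Pi.algHom Ω _ (fun i => Pi.evalAlgHom Ω (fun _ : J => Ω) (e i)))
    (by apply AlgHom.ext; intro x; funext j; simp)
    (by apply AlgHom.ext; intro x; funext i; simp)

variable {Ω : Type} [Field Ω] {I : Type} [Fintype I] [DecidableEq I]

lemma quotient_pi_field {B : Type} [CommRing B] [Algebra Ω B]
    (q : (I → Ω) →ₐ[Ω] B) (hq : Function.Surjective q) :
    ∃ N : ℕ, Nonempty (B ≃ₐ[Ω] (Fin N → Ω)) := by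
  classical
  set T : Set I := {u | ∀ y ∈ RingHom.ker q.toRingHom, y u = 0} with hT
  haveI : Fintype ↥T := Fintype.ofFinite ↥T
  let ρ : (I → Ω) →ₐ[Ω] (↥T → Ω) := Pi.algHom Ω _ (fun u => Pi.evalAlgHom Ω (fun _ : I => Ω) u.1)
  have hρs : Function.Surjective ρ := by
    intro g
    refine ⟨fun i => if h : i ∈ T then g ⟨i, h⟩ else 0, ?_⟩
    funext u
    show (if h : (u:I) ∈ T then g ⟨u, h⟩ else 0) = g u
    rw [dif_pos u.2]
  have hker : RingHom.ker ρ.toRingHom = RingHom.ker q.toRingHom := by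
    ext x
    simp only [RingHom.mem_ker]
    constructor
    · intro hx
      have hmem : x ∈ RingHom.ker q.toRingHom := by
        apply pi_ideal_mem _ x
        intro u hu
        have := congrFun hx ⟨u, hu⟩
        exact this
      rwa [RingHom.mem_ker] at hmem
    · intro hx
      funext u
      exact u.2 x (by rwa [RingHom.mem_ker])
  let e1 := Ideal.quotientKerAlgEquivOfSurjective hq
  let e2 := Ideal.quotientKerAlgEquivOfSurjective hρs
  let e3 := Ideal.quotientEquivAlgOfEq Ω hker
  refine ⟨Fintype.card ↥T, ⟨?_⟩⟩
  exact ((e1.symm.trans e3.symm).trans e2).trans (piReindexAlg Ω (Fintype.equivFin ↥T))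

end Quot

section BCE

variable {k L Ω A : Type} [Field k] [Field L] [Field Ω] [Algebra k L] [Algebra k Ω]
  [CommRing A] [Algebra k A] {n : ℕ}

noncomputable def bceHom (e : (L ⊗[k] A) ≃ₐ[L] (Fin n → L)) (j : L →ₐ[k] Ω) :
    (Ω ⊗[k] A) →ₐ[Ω] (Fin n → Ω) :=
  Algebra.TensorProduct.lift (Algebra.ofId Ω _)
    ((Pi.algHom k (fun _ : Fin n => Ω)
        (fun i => j.comp ((Pi.evalAlgHom L (fun _ : Fin n => L) i).restrictScalars k))).comp
      ((e.toAlgHom.restrictScalars k).comp Algebra.TensorProduct.includeRight))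
    (fun _ _ => Commute.all _ _)

lemma bceHom_tmul (e : (L ⊗[k] A) ≃ₐ[L] (Fin n → L)) (j : L →ₐ[k] Ω) (ω : Ω) (a : A) :
    bceHom e j (ω ⊗ₜ[k] a) = fun i => ω * j (e ((1:L) ⊗ₜ[k] a) i) := by
  funext i
  simp [bceHom, Algebra.TensorProduct.lift_tmul, Algebra.ofId_apply]

lemma bceHom_surjective (e : (L ⊗[k] A) ≃ₐ[L] (Fin n → L)) (j : L →ₐ[k] Ω) :
    Function.Surjective (bceHom e j) := by
  classical
  letI : Algebra L Ω := j.toRingHom.toAlgebra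
  let jPiL : (Fin n → L) →ₐ[L] (Fin n → Ω) :=
    Pi.algHom L (fun _ : Fin n => Ω)
      (fun i => (Algebra.ofId L Ω).comp (Pi.evalAlgHom L (fun _ : Fin n => L) i))
  have hjapp : ∀ (h0 : Fin n → L) (i : Fin n), jPiL h0 i = j (h0 i) := by
    intro h0 i; rfl
  have hjpi : ∀ h0 : Fin n → L, (fun i => j (h0 i)) ∈ (bceHom e j).range := by
    intro h0
    have hmem := mem_of_baseChange_gen e
      (((bceHom e j).range.restrictScalars L).comap jPiL) ?_ h0
    · rw [Subalgebra.mem_comap] at hmem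
      have : jPiL h0 ∈ (bceHom e j).range := hmem
      have heq : jPiL h0 = fun i => j (h0 i) := by funext i; rfl
      rwa [heq] at this
    · intro a
      rw [Subalgebra.mem_comap]
      show jPiL (e ((1:L) ⊗ₜ[k] a)) ∈ (bceHom e j).range
      refine ⟨(1:Ω) ⊗ₜ[k] a, ?_⟩
      show bceHom e j ((1:Ω) ⊗ₜ[k] a) = _
      rw [bceHom_tmul]
      funext i
      rw [one_mul]
      rfl
  have hsingle : ∀ (i₀ : Fin n) (ω : Ω), Pi.single i₀ ω ∈ (bceHom e j).range := by
    intro i₀ ω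
    have h1 := hjpi ((Pi.single i₀ (1:L) : Fin n → L))
    have hω : (algebraMap Ω (Fin n → Ω)) ω ∈ (bceHom e j).range :=
      Subalgebra.algebraMap_mem _ ω
    have heq : (Pi.single i₀ ω : Fin n → Ω) =
        (algebraMap Ω (Fin n → Ω)) ω * (fun i => j ((Pi.single i₀ (1:L) : Fin n → L) i)) := by
      funext i
      simp only [Pi.mul_apply, Pi.single_apply, Pi.algebraMap_apply]
      by_cases hi : i = i₀
      · simp [hi, Algebra.algebraMap_self]
      · simp [hi]
    rw [heq]
    exact mul_mem hω h1
  intro x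
  have hx : x ∈ (bceHom e j).range := by
    have hrep : x = ∑ i : Fin n, Pi.single i (x i) := (Finset.univ_sum_single x).symm
    rw [hrep]
    exact sum_mem (fun i _ => hsingle i (x i))
  exact hx

lemma bceHom_bijective (e : (L ⊗[k] A) ≃ₐ[L] (Fin n → L)) (j : L →ₐ[k] Ω) :
    Function.Bijective (bceHom e j) := by
  obtain ⟨fd, hfr⟩ := dim_of_baseChange_pi e
  haveI := fd
  obtain ⟨fdΩ, hrk⟩ := fd_baseChange (k := k) (Ω := Ω) (A := A)
  haveI := fdΩ
  refine ⟨?_, bceHom_surjective e j⟩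
  have h : Module.finrank Ω (Ω ⊗[k] A) = Module.finrank Ω (Fin n → Ω) := by
    rw [hrk, hfr, Module.finrank_pi, Fintype.card_fin]
  exact bij_of_surj (bceHom e j).toLinearMap h (bceHom_surjective e j)

noncomputable def bceEquiv (e : (L ⊗[k] A) ≃ₐ[L] (Fin n → L)) (j : L →ₐ[k] Ω) :
    (Ω ⊗[k] A) ≃ₐ[Ω] (Fin n → Ω) :=
  AlgEquiv.ofBijective (bceHom e j) (bceHom_bijective e j)

end BCE


/-- Extend a ring hom `g : K →+* Ω'` to an algebraically closed field along an
algebraic embedding `i : K →+* Ω`. -/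
lemma ringhom_extend {K Ω Ω' : Type} [Field K] [Field Ω] [Field Ω'] [IsAlgClosed Ω']
    (i : K →+* Ω) (g : K →+* Ω')
    (halg : ∀ x : Ω, ∃ p : Polynomial K, p ≠ 0 ∧ Polynomial.eval₂ i x p = 0) :
    ∃ f : Ω →+* Ω', ∀ c : K, f (i c) = g c := by
  letI A1 : Algebra K Ω := i.toAlgebra
  letI A2 : Algebra K Ω' := g.toAlgebra
  haveI halg' : Algebra.IsAlgebraic K Ω := by
    constructor
    intro x
    obtain ⟨p, hp, hev⟩ := halg x
    refine ⟨p, hp, ?_⟩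
    rw [Polynomial.aeval_def, RingHom.algebraMap_toAlgebra]
    exact hev
  haveI nz1 : NoZeroSMulDivisors K Ω :=
    inferInstance
  haveI nz2 : NoZeroSMulDivisors K Ω' :=
    inferInstance
  let f : Ω →ₐ[K] Ω' := IsAlgClosed.lift
  refine ⟨f.toRingHom, fun c => ?_⟩
  have h := f.commutes c
  rw [RingHom.algebraMap_toAlgebra, RingHom.algebraMap_toAlgebra] at h
  exact h


section Compositum

variable {k : Type} [Field k] {A₁ A₂ C : Type} [CommRing A₁] [CommRing A₂] [CommRing C]
  [Algebra k A₁] [Algebra k A₂] [Algebra k C]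

lemma etale_compositum (hE₁ : IsEtaleAlgebra k A₁) (hE₂ : IsEtaleAlgebra k A₂)
    (π : A₁ ⊗[k] A₂ →ₐ[k] C) (hπ : Function.Surjective π) : IsEtaleAlgebra k C := by
  classical
  obtain ⟨n, ⟨e₁⟩⟩ := hE₁
  obtain ⟨m, ⟨e₂⟩⟩ := hE₂
  set L := AlgebraicClosure k with hLdef
  let Ψ := psiEquiv e₁ e₂
  let p : L ⊗[k] (A₁ ⊗[k] A₂) →ₐ[L] L ⊗[k] C :=
    Algebra.TensorProduct.lift (Algebra.ofId L _)
      ((Algebra.TensorProduct.includeRight).comp π) (fun _ _ => Commute.all _ _)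
  have hp_tmul : ∀ (ω : L) (d : A₁ ⊗[k] A₂), p (ω ⊗ₜ[k] d) = ω ⊗ₜ[k] π d := by
    intro ω d
    show Algebra.TensorProduct.lift _ _ _ (ω ⊗ₜ[k] d) = _
    rw [Algebra.TensorProduct.lift_tmul]
    show (algebraMap L (L ⊗[k] C)) ω * ((1:L) ⊗ₜ[k] π d) = ω ⊗ₜ[k] π d
    rw [Algebra.TensorProduct.algebraMap_apply, Algebra.algebraMap_self, RingHom.id_apply,
      Algebra.TensorProduct.tmul_mul_tmul, one_mul, mul_one]
  have hps : Function.Surjective p := by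
    intro z
    induction z using TensorProduct.induction_on with
    | zero => exact ⟨0, map_zero _⟩
    | tmul ω c =>
      obtain ⟨d, rfl⟩ := hπ c
      exact ⟨ω ⊗ₜ[k] d, hp_tmul ω d⟩
    | add x y hx hy =>
      obtain ⟨x', rfl⟩ := hx
      obtain ⟨y', rfl⟩ := hy
      exact ⟨x' + y', map_add _ _ _⟩
  have hqs : Function.Surjective (p.comp (Ψ.symm : (Fin n × Fin m → L) ≃ₐ[L] _).toAlgHom) :=
    hps.comp Ψ.symm.surjective
  obtain ⟨N, ⟨eq⟩⟩ := quotient_pi_field (p.comp Ψ.symm.toAlgHom) hqs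
  exact ⟨N, ⟨eq⟩⟩

lemma sigmaSep_compositum (σk : k →+* k)
    (σ₁ : A₁ →+* A₁) (σ₂ : A₂ →+* A₂) (σC : C →+* C)
    (hσ₁ : ∀ x : k, σ₁ (algebraMap k A₁ x) = algebraMap k A₁ (σk x))
    (hσ₂ : ∀ x : k, σ₂ (algebraMap k A₂ x) = algebraMap k A₂ (σk x))
    (hσC : ∀ x : k, σC (algebraMap k C x) = algebraMap k C (σk x))
    (hE₁ : IsEtaleAlgebra k A₁) (hE₂ : IsEtaleAlgebra k A₂)
    (hS₁ : IsSigmaSeparable k A₁ σk σ₁) (hS₂ : IsSigmaSeparable k A₂ σk σ₂)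
    (π : A₁ ⊗[k] A₂ →ₐ[k] C) (hπs : Function.Surjective π)
    (hπσ : ∀ (a₁ : A₁) (a₂ : A₂), π (σ₁ a₁ ⊗ₜ[k] σ₂ a₂) = σC (π (a₁ ⊗ₜ[k] a₂))) :
    IsSigmaSeparable k C σk σC := by
  classical
  obtain ⟨n, ⟨e₁⟩⟩ := hE₁
  obtain ⟨m, ⟨e₂⟩⟩ := hE₂
  intro K _ _ σK hσK τ' hτ'
  set L := AlgebraicClosure k with hLdef
  set Ω := AlgebraicClosure K with hΩdef
  obtain ⟨σΩ, hσΩ⟩ : ∃ σΩ : Ω →+* Ω, ∀ c : K,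
      σΩ (algebraMap K Ω c) = algebraMap K Ω (σK c) := by
    refine ringhom_extend (algebraMap K Ω) ((algebraMap K Ω).comp σK) ?_
    intro x
    obtain ⟨p, hp, hev⟩ := Algebra.IsAlgebraic.isAlgebraic (R := K) x
    refine ⟨p, hp, ?_⟩
    rw [Polynomial.aeval_def] at hev
    exact hev
  have hσΩk : ∀ x : k, σΩ (algebraMap k Ω x) = algebraMap k Ω (σk x) := by
    intro x
    have h1 : (algebraMap k Ω) x = algebraMap K Ω (algebraMap k K x) :=
      IsScalarTower.algebraMap_apply k K Ω x
    rw [h1, hσΩ, hσK, ← IsScalarTower.algebraMap_apply]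
  let τ'' := tth σk σΩ σC hσΩk hσC
  let ι : K ⊗[k] C →ₐ[k] Ω ⊗[k] C :=
    Algebra.TensorProduct.map (IsScalarTower.toAlgHom k K Ω) (AlgHom.id k C)
  have hι_tmul : ∀ (a : K) (c : C), ι (a ⊗ₜ[k] c) = (algebraMap K Ω a) ⊗ₜ[k] c := by
    intro a c
    simp [ι, Algebra.TensorProduct.map_tmul]
  have hιinj : Function.Injective ι := by
    have hflat := Module.Flat.rTensor_preserves_injective_linearMap
      (M := C) (IsScalarTower.toAlgHom k K Ω).toLinearMap
      (show Function.Injective (IsScalarTower.toAlgHom k K Ω) from (algebraMap K Ω).injective)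
    have heq : ∀ z, ι z = LinearMap.rTensor C (IsScalarTower.toAlgHom k K Ω).toLinearMap z := by
      intro z
      induction z using TensorProduct.induction_on with
      | zero => simp
      | tmul a c => rw [hι_tmul, LinearMap.rTensor_tmul]; rfl
      | add x y hx hy => rw [map_add, map_add, hx, hy]
    intro a b hab
    apply hflat
    rw [← heq, ← heq, hab]
  have hcommι : ∀ z, ι (τ' z) = τ'' (ι z) := by
    intro z
    induction z using TensorProduct.induction_on with
    | zero => simp
    | tmul a c =>
      rw [hτ', hι_tmul, hι_tmul]
      show (algebraMap K Ω) (σK a) ⊗ₜ[k] σC c = tth σk σΩ σC hσΩk hσC ((algebraMap K Ω a) ⊗ₜ[k] c)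
      rw [tth_tmul, hσΩ a]
    | add x y hx hy => simp only [map_add, hx, hy]
  suffices hτ'' : Function.Injective τ'' by
    intro a b hab
    exact hιinj (hτ'' (by rw [← hcommι, ← hcommι, hab]))
  -- the heart: injectivity on Ω ⊗ C
  haveI nzkL : NoZeroSMulDivisors k L :=
    inferInstance
  haveI nzkΩ : NoZeroSMulDivisors k Ω :=
    inferInstance
  let jΩ : L →ₐ[k] Ω := IsAlgClosed.lift
  let α := bceEquiv e₁ jΩ
  let β := bceEquiv e₂ jΩ
  let Ψ := psiEquiv α β
  let σ₁₂ := tth σk σ₁ σ₂ hσ₁ hσ₂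
  have hσ₁₂k : ∀ x : k, σ₁₂ (algebraMap k (A₁ ⊗[k] A₂) x) =
      algebraMap k (A₁ ⊗[k] A₂) (σk x) := by
    intro x
    have hmap : ∀ y : k, (algebraMap k (A₁ ⊗[k] A₂)) y = (algebraMap k A₁ y) ⊗ₜ[k] (1:A₂) :=
      fun y => Algebra.TensorProduct.algebraMap_apply y
    rw [hmap, hmap]
    show tth σk σ₁ σ₂ hσ₁ hσ₂ ((algebraMap k A₁ x) ⊗ₜ[k] (1:A₂)) = _
    rw [tth_tmul, hσ₁ x, map_one]
  let τD := tth σk σΩ σ₁₂ hσΩk hσ₁₂k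
  let τ₁ := tth σk σΩ σ₁ hσΩk hσ₁
  let τ₂ := tth σk σΩ σ₂ hσΩk hσ₂
  have hτ₁ : Function.Injective τ₁ := hS₁ Ω σΩ hσΩk τ₁ (fun a b => rfl)
  have hτ₂ : Function.Injective τ₂ := hS₂ Ω σΩ hσΩk τ₂ (fun a b => rfl)
  let P := Fin n × Fin m → Ω
  let Θ : P →+* P := (Ψ.toAlgHom.toRingHom.comp τD).comp Ψ.symm.toAlgHom.toRingHom
  have hΘΨ : ∀ z, Θ (Ψ z) = Ψ (τD z) := by
    intro z
    show Ψ (τD (Ψ.symm (Ψ z))) = Ψ (τD z)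
    rw [AlgEquiv.symm_apply_apply]
  let Θ₁ : (Fin n → Ω) →+* (Fin n → Ω) :=
    (α.toAlgHom.toRingHom.comp τ₁).comp α.symm.toAlgHom.toRingHom
  let Θ₂ : (Fin m → Ω) →+* (Fin m → Ω) :=
    (β.toAlgHom.toRingHom.comp τ₂).comp β.symm.toAlgHom.toRingHom
  have hΘ₁ : Function.Injective Θ₁ :=
    α.injective.comp (hτ₁.comp α.symm.injective)
  have hΘ₂ : Function.Injective Θ₂ :=
    β.injective.comp (hτ₂.comp β.symm.injective)
  obtain ⟨t, ht⟩ := pi_endo_exists_t Θ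
  obtain ⟨t1, ht1⟩ := pi_endo_exists_t Θ₁
  obtain ⟨t2, ht2⟩ := pi_endo_exists_t Θ₂
  have ht1s : Function.Surjective t1 := pi_endo_surjective_of_injective Θ₁ ht1 hΘ₁
  have ht2s : Function.Surjective t2 := pi_endo_surjective_of_injective Θ₂ ht2 hΘ₂
  -- the two inclusion maps
  let ι₁ : Ω ⊗[k] A₁ →ₐ[k] Ω ⊗[k] (A₁ ⊗[k] A₂) :=
    Algebra.TensorProduct.map (AlgHom.id k Ω) Algebra.TensorProduct.includeLeft
  let ι₂ : Ω ⊗[k] A₂ →ₐ[k] Ω ⊗[k] (A₁ ⊗[k] A₂) :=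
    Algebra.TensorProduct.map (AlgHom.id k Ω) Algebra.TensorProduct.includeRight
  have hR1 : ∀ y : Ω ⊗[k] A₁, Ψ (ι₁ y) = fun p : Fin n × Fin m => α y p.1 := by
    intro y
    induction y using TensorProduct.induction_on with
    | zero => funext p; simp
    | tmul ω a₁ =>
      have h1 : ι₁ (ω ⊗ₜ[k] a₁) = ω ⊗ₜ[k] (a₁ ⊗ₜ[k] (1:A₂)) := by
        simp [ι₁, Algebra.TensorProduct.map_tmul]
      rw [h1]
      show psiEquiv α β _ = _
      rw [psiEquiv_tmul]
      funext p
      have h11 : ((1:Ω) ⊗ₜ[k] (1:A₂)) = (1 : Ω ⊗[k] A₂) := (Algebra.TensorProduct.one_def).symm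
      rw [h11, map_one]
      have hsm : ω ⊗ₜ[k] a₁ = ω • ((1:Ω) ⊗ₜ[k] a₁) := by
        rw [smul_tmul', smul_eq_mul, mul_one]
      rw [hsm, map_smul]
      simp [mul_comm]
    | add x y hx hy =>
      rw [map_add, map_add, hx, hy]
      funext p
      simp
  have hR2 : ∀ y : Ω ⊗[k] A₂, Ψ (ι₂ y) = fun p : Fin n × Fin m => β y p.2 := by
    intro y
    induction y using TensorProduct.induction_on with
    | zero => funext p; simp
    | tmul ω a₂ =>
      have h1 : ι₂ (ω ⊗ₜ[k] a₂) = ω ⊗ₜ[k] ((1:A₁) ⊗ₜ[k] a₂) := by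
        simp [ι₂, Algebra.TensorProduct.map_tmul]
      rw [h1]
      show psiEquiv α β _ = _
      rw [psiEquiv_tmul]
      funext p
      have h11 : ((1:Ω) ⊗ₜ[k] (1:A₁)) = (1 : Ω ⊗[k] A₁) := (Algebra.TensorProduct.one_def).symm
      rw [h11, map_one]
      have hsm : ω ⊗ₜ[k] a₂ = ω • ((1:Ω) ⊗ₜ[k] a₂) := by
        rw [smul_tmul', smul_eq_mul, mul_one]
      rw [hsm, map_smul]
      simp
    | add x y hx hy =>
      rw [map_add, map_add, hx, hy]
      funext p
      simp
  have hcomm1 : ∀ y : Ω ⊗[k] A₁, τD (ι₁ y) = ι₁ (τ₁ y) := by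
    intro y
    induction y using TensorProduct.induction_on with
    | zero => simp
    | tmul ω a₁ =>
      have h1 : ι₁ (ω ⊗ₜ[k] a₁) = ω ⊗ₜ[k] (a₁ ⊗ₜ[k] (1:A₂)) := by
        simp [ι₁, Algebra.TensorProduct.map_tmul]
      rw [h1]
      show tth σk σΩ σ₁₂ hσΩk hσ₁₂k (ω ⊗ₜ[k] (a₁ ⊗ₜ[k] (1:A₂))) = _
      rw [tth_tmul]
      show σΩ ω ⊗ₜ[k] (tth σk σ₁ σ₂ hσ₁ hσ₂ (a₁ ⊗ₜ[k] (1:A₂))) = _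
      rw [tth_tmul, map_one]
      show _ = ι₁ (tth σk σΩ σ₁ hσΩk hσ₁ (ω ⊗ₜ[k] a₁))
      rw [tth_tmul]
      simp [ι₁, Algebra.TensorProduct.map_tmul]
    | add x y hx hy => simp only [map_add, hx, hy]
  have hcomm2 : ∀ y : Ω ⊗[k] A₂, τD (ι₂ y) = ι₂ (τ₂ y) := by
    intro y
    induction y using TensorProduct.induction_on with
    | zero => simp
    | tmul ω a₂ =>
      have h1 : ι₂ (ω ⊗ₜ[k] a₂) = ω ⊗ₜ[k] ((1:A₁) ⊗ₜ[k] a₂) := by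
        simp [ι₂, Algebra.TensorProduct.map_tmul]
      rw [h1]
      show tth σk σΩ σ₁₂ hσΩk hσ₁₂k (ω ⊗ₜ[k] ((1:A₁) ⊗ₜ[k] a₂)) = _
      rw [tth_tmul]
      show σΩ ω ⊗ₜ[k] (tth σk σ₁ σ₂ hσ₁ hσ₂ ((1:A₁) ⊗ₜ[k] a₂)) = _
      rw [tth_tmul, map_one]
      show _ = ι₂ (tth σk σΩ σ₂ hσΩk hσ₂ (ω ⊗ₜ[k] a₂))
      rw [tth_tmul]
      simp [ι₂, Algebra.TensorProduct.map_tmul]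
    | add x y hx hy => simp only [map_add, hx, hy]
  have hC1 : ∀ p : Fin n × Fin m, (t p).1 = t1 p.1 := by
    intro p
    set y := α.symm (Pi.single (t1 p.1) (1:Ω)) with hydef
    have hαy : α y = Pi.single (t1 p.1) (1:Ω) := α.apply_symm_apply _
    have hΘx : Θ (Ψ (ι₁ y)) = fun p' : Fin n × Fin m => Θ₁ (α y) p'.1 := by
      rw [hΘΨ, hcomm1, hR1]
      funext p'
      show α (τ₁ y) p'.1 = _
      have : Θ₁ (α y) = α (τ₁ y) := by
        show α (τ₁ (α.symm (α y))) = α (τ₁ y)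
        rw [AlgEquiv.symm_apply_apply]
      rw [this]
    have h1 : Θ (Ψ (ι₁ y)) p ≠ 0 := by
      rw [hΘx]
      intro h0
      have h2 := (ht1 (α y) p.1).mp h0
      rw [hαy] at h2
      simp at h2
    by_contra hne
    apply h1
    rw [ht (Ψ (ι₁ y)) p, hR1, hαy]
    simp only []
    simp [Pi.single_apply, hne]
  have hC2 : ∀ p : Fin n × Fin m, (t p).2 = t2 p.2 := by
    intro p
    set y := β.symm (Pi.single (t2 p.2) (1:Ω)) with hydef
    have hβy : β y = Pi.single (t2 p.2) (1:Ω) := β.apply_symm_apply _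
    have hΘx : Θ (Ψ (ι₂ y)) = fun p' : Fin n × Fin m => Θ₂ (β y) p'.2 := by
      rw [hΘΨ, hcomm2, hR2]
      funext p'
      show β (τ₂ y) p'.2 = _
      have : Θ₂ (β y) = β (τ₂ y) := by
        show β (τ₂ (β.symm (β y))) = β (τ₂ y)
        rw [AlgEquiv.symm_apply_apply]
      rw [this]
    have h1 : Θ (Ψ (ι₂ y)) p ≠ 0 := by
      rw [hΘx]
      intro h0
      have h2 := (ht2 (β y) p.2).mp h0
      rw [hβy] at h2
      simp at h2
    by_contra hne
    apply h1
    rw [ht (Ψ (ι₂ y)) p, hR2, hβy]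
    simp only []
    simp [Pi.single_apply, hne]
  have hts : Function.Surjective t := by
    intro p₀
    obtain ⟨i, hi⟩ := ht1s p₀.1
    obtain ⟨j', hj⟩ := ht2s p₀.2
    refine ⟨(i, j'), ?_⟩
    have hh1 := hC1 (i, j')
    have hh2 := hC2 (i, j')
    exact Prod.ext (by rw [hh1]; exact hi) (by rw [hh2]; exact hj)
  have hΘinj : Function.Injective Θ := pi_endo_injective_of_surjective Θ ht hts
  have hτDinj : Function.Injective τD := by
    intro a b hab
    apply Ψ.injective
    apply hΘinj
    rw [hΘΨ, hΘΨ, hab]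
  -- the quotient map
  let p' : Ω ⊗[k] (A₁ ⊗[k] A₂) →ₐ[Ω] Ω ⊗[k] C :=
    Algebra.TensorProduct.lift (Algebra.ofId Ω _)
      ((Algebra.TensorProduct.includeRight).comp π) (fun _ _ => Commute.all _ _)
  have hp_tmul : ∀ (ω : Ω) (d : A₁ ⊗[k] A₂), p' (ω ⊗ₜ[k] d) = ω ⊗ₜ[k] π d := by
    intro ω d
    show Algebra.TensorProduct.lift _ _ _ (ω ⊗ₜ[k] d) = _
    rw [Algebra.TensorProduct.lift_tmul]
    show (algebraMap Ω (Ω ⊗[k] C)) ω * ((1:Ω) ⊗ₜ[k] π d) = ω ⊗ₜ[k] π d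
    rw [Algebra.TensorProduct.algebraMap_apply, Algebra.algebraMap_self, RingHom.id_apply,
      Algebra.TensorProduct.tmul_mul_tmul, one_mul, mul_one]
  have hπσ' : ∀ d, π (σ₁₂ d) = σC (π d) := by
    intro d
    induction d using TensorProduct.induction_on with
    | zero => simp
    | tmul a₁ a₂ =>
      show π (tth σk σ₁ σ₂ hσ₁ hσ₂ (a₁ ⊗ₜ[k] a₂)) = _
      rw [tth_tmul]
      exact hπσ a₁ a₂
    | add x y hx hy => simp only [map_add, hx, hy]
  have hpτ : ∀ z, τ'' (p' z) = p' (τD z) := by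
    intro z
    induction z using TensorProduct.induction_on with
    | zero => simp
    | tmul ω d =>
      rw [hp_tmul]
      show tth σk σΩ σC hσΩk hσC (ω ⊗ₜ[k] π d) = _
      rw [tth_tmul]
      have : τD (ω ⊗ₜ[k] d) = σΩ ω ⊗ₜ[k] σ₁₂ d := rfl
      rw [this, hp_tmul, hπσ']
    | add x y hx hy => simp only [map_add, hx, hy]
  have hp's : Function.Surjective p' := by
    intro z
    induction z using TensorProduct.induction_on with
    | zero => exact ⟨0, map_zero _⟩
    | tmul ω c =>
      obtain ⟨d, rfl⟩ := hπs c
      exact ⟨ω ⊗ₜ[k] d, hp_tmul ω d⟩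
    | add x y hx hy =>
      obtain ⟨x', rfl⟩ := hx
      obtain ⟨y', rfl⟩ := hy
      exact ⟨x' + y', map_add _ _ _⟩
  let qq : P →+* Ω ⊗[k] C := p'.toRingHom.comp Ψ.symm.toAlgHom.toRingHom
  have hqqs : Function.Surjective qq := hp's.comp Ψ.symm.surjective
  have hqqΘ : ∀ x, qq (Θ x) = τ'' (qq x) := by
    intro x
    show p' (Ψ.symm (Θ x)) = τ'' (p' (Ψ.symm x))
    have h1 : Ψ.symm (Θ x) = τD (Ψ.symm x) := by
      apply Ψ.injective
      rw [AlgEquiv.apply_symm_apply, ← hΘΨ (Ψ.symm x), AlgEquiv.apply_symm_apply]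
    rw [h1, hpτ]
  set J : Ideal P := RingHom.ker qq with hJdef
  have hJstab : ∀ x ∈ J, Θ x ∈ J := by
    intro x hx
    rw [RingHom.mem_ker] at hx ⊢
    rw [hqqΘ, hx, map_zero]
  have hsat := pi_key Θ hΘinj J hJstab
  rw [injective_iff_map_eq_zero]
  intro z hz
  obtain ⟨x, rfl⟩ := hqqs z
  have hmem : Θ x ∈ J := by
    rw [RingHom.mem_ker, hqqΘ]
    exact hz
  have hxJ := hsat x hmem
  rwa [RingHom.mem_ker] at hxJ

end Compositum

section Bot

/-- An algebra iso between subsingleton algebras. -/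
noncomputable def algEquivOfSubsingleton {S A B : Type} [CommSemiring S] [Semiring A] [Semiring B]
    [Algebra S A] [Algebra S B] [Subsingleton A] [Subsingleton B] : A ≃ₐ[S] B where
  toFun := fun _ => 1
  invFun := fun _ => 1
  left_inv := fun _ => Subsingleton.elim _ _
  right_inv := fun _ => Subsingleton.elim _ _
  map_mul' := fun _ _ => Subsingleton.elim _ _
  map_add' := fun _ _ => Subsingleton.elim _ _
  commutes' := fun _ => Subsingleton.elim _ _

variable {k R : Type} [Field k] [CommRing R] [Algebra k R]

lemma tensor_bot_subsingleton [Subsingleton R] (K : Type) [CommRing K] [Algebra k K] :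
    Subsingleton (K ⊗[k] ↥(⊥ : Subalgebra k R)) := by
  constructor
  have hz : ∀ z : K ⊗[k] ↥(⊥ : Subalgebra k R), z = 0 := by
    intro z
    induction z using TensorProduct.induction_on with
    | zero => rfl
    | tmul a b => rw [Subsingleton.elim b 0, TensorProduct.tmul_zero]
    | add x y hx hy => rw [hx, hy, add_zero]
  intro a b
  rw [hz a, hz b]

lemma bot_strongly_etale (σk : k →+* k) (σR : R →+* R)
    (hcomp : ∀ x : k, σR (algebraMap k R x) = algebraMap k R (σk x)) :
    IsStronglySigmaEtaleSubalgebra k R σk σR ⊥ := by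
  classical
  have hstab : ∀ x ∈ (⊥ : Subalgebra k R), σR x ∈ (⊥ : Subalgebra k R) := by
    intro x hx
    rw [Algebra.mem_bot] at hx ⊢
    obtain ⟨y, rfl⟩ := hx
    exact ⟨σk y, (hcomp y).symm⟩
  refine ⟨hstab, ?_, ?_⟩
  · rcases subsingleton_or_nontrivial R with hsub | hnt
    · haveI := tensor_bot_subsingleton (k := k) (R := R) (AlgebraicClosure k)
      haveI : Subsingleton (Fin 0 → AlgebraicClosure k) :=
        ⟨fun a b => funext (fun i => i.elim0)⟩
      exact ⟨0, ⟨algEquivOfSubsingleton⟩⟩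
    · refine ⟨1, ⟨?_⟩⟩
      let c1 : (AlgebraicClosure k) ⊗[k] ↥(⊥ : Subalgebra k R) ≃ₐ[AlgebraicClosure k]
          (AlgebraicClosure k) ⊗[k] k :=
        Algebra.TensorProduct.congr AlgEquiv.refl (Algebra.botEquiv k R)
      let c2 := Algebra.TensorProduct.rid k (AlgebraicClosure k) (AlgebraicClosure k)
      let c3 : (AlgebraicClosure k) ≃ₐ[AlgebraicClosure k] (Fin 1 → AlgebraicClosure k) :=
        AlgEquiv.ofAlgHom (Algebra.ofId _ _) (Pi.evalAlgHom _ _ 0)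
          (by
            apply AlgHom.ext; intro x; funext i
            simp [Algebra.ofId_apply, Subsingleton.elim i (0 : Fin 1)])
          (by apply AlgHom.ext; intro x; simp [Algebra.ofId_apply])
      exact (c1.trans c2).trans c3
  · intro K _ _ σK hσK τ hτ
    rcases subsingleton_or_nontrivial R with hsub | hnt
    · haveI := tensor_bot_subsingleton (k := k) (R := R) K
      intro a b _
      exact Subsingleton.elim a b
    · have hrep : ∀ z : K ⊗[k] ↥(⊥ : Subalgebra k R), ∃ a : K, z = a ⊗ₜ[k] 1 := by
        intro z
        induction z using TensorProduct.induction_on with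
        | zero => exact ⟨0, (TensorProduct.zero_tmul _ _).symm⟩
        | tmul a b =>
          obtain ⟨y, hy⟩ := (Algebra.mem_bot).mp b.2
          have hb : b = y • (1 : ↥(⊥ : Subalgebra k R)) := by
            apply Subtype.ext
            rw [← hy]
            simp [Algebra.algebraMap_eq_smul_one]
          refine ⟨y • a, ?_⟩
          rw [hb, TensorProduct.tmul_smul, TensorProduct.smul_tmul']
        | add x y hx hy =>
          obtain ⟨a, rfl⟩ := hx
          obtain ⟨b, rfl⟩ := hy
          exact ⟨a + b, by rw [TensorProduct.add_tmul]⟩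
      let μ : K ⊗[k] ↥(⊥ : Subalgebra k R) →ₐ[K] K :=
        Algebra.TensorProduct.lift (AlgHom.id K K)
          ((Algebra.ofId k K).comp (Algebra.botEquiv k R).toAlgHom) (fun _ _ => Commute.all _ _)
      have hμ : ∀ a : K, μ (a ⊗ₜ[k] 1) = a := by
        intro a
        show Algebra.TensorProduct.lift _ _ _ (a ⊗ₜ[k] 1) = a
        rw [Algebra.TensorProduct.lift_tmul]
        simp [Algebra.ofId_apply]
      intro z₁ z₂ h12
      obtain ⟨a₁, rfl⟩ := hrep z₁
      obtain ⟨a₂, rfl⟩ := hrep z₂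
      have h1 : τ (a₁ ⊗ₜ[k] 1) = σK a₁ ⊗ₜ[k] 1 := by rw [hτ, map_one]
      have h2 : τ (a₂ ⊗ₜ[k] 1) = σK a₂ ⊗ₜ[k] 1 := by rw [hτ, map_one]
      rw [h1, h2] at h12
      have h3 : σK a₁ = σK a₂ := by
        have := congrArg μ h12
        rwa [hμ, hμ] at this
      rw [σK.injective h3]

end Bot


/-- The compositum of two strongly σ-étale `k`-σ-subalgebras is strongly σ-étale;
consequently the union of all strongly σ-étale `k`-σ-subalgebras is a σ-stable
`k`-subalgebra of `R`. -/
theorem strongly_etale_stmt11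
    (k R : Type) [Field k] [CommRing R] [Algebra k R]
    (σk : k →+* k) (σR : R →+* R)
    (hcomp : ∀ x : k, σR (algebraMap k R x) = algebraMap k R (σk x)) :
    (∀ R₁ R₂ : Subalgebra k R,
      IsStronglySigmaEtaleSubalgebra k R σk σR R₁ →
      IsStronglySigmaEtaleSubalgebra k R σk σR R₂ →
      IsStronglySigmaEtaleSubalgebra k R σk σR (R₁ ⊔ R₂)) ∧
    ∃ C : Subalgebra k R,
      ((C : Set R) = ⋃ A ∈ {A : Subalgebra k R | IsStronglySigmaEtaleSubalgebra k R σk σR A},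
        (A : Set R)) ∧ (∀ x ∈ C, σR x ∈ C) := by
  classical
  have part1 : ∀ R₁ R₂ : Subalgebra k R,
      IsStronglySigmaEtaleSubalgebra k R σk σR R₁ →
      IsStronglySigmaEtaleSubalgebra k R σk σR R₂ →
      IsStronglySigmaEtaleSubalgebra k R σk σR (R₁ ⊔ R₂) := by
    intro R₁ R₂ h₁ h₂
    obtain ⟨hst₁, hEt₁, hSep₁⟩ := h₁
    obtain ⟨hst₂, hEt₂, hSep₂⟩ := h₂
    have hstC : ∀ x ∈ R₁ ⊔ R₂, σR x ∈ R₁ ⊔ R₂ := by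
      intro x hx
      have hsup : R₁ ⊔ R₂ = Algebra.adjoin k ((R₁ : Set R) ∪ (R₂ : Set R)) := by
        rw [Algebra.adjoin_union, Algebra.adjoin_eq, Algebra.adjoin_eq]
      rw [hsup] at hx
      induction hx using Algebra.adjoin_induction with
      | mem y hy =>
        rcases hy with hy | hy
        · exact SetLike.le_def.mp le_sup_left (hst₁ y hy)
        · exact SetLike.le_def.mp le_sup_right (hst₂ y hy)
      | algebraMap r =>
        rw [hcomp r]
        exact Subalgebra.algebraMap_mem _ _
      | add a b ha hb hpa hpb =>
        rw [map_add]
        exact add_mem hpa hpb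
      | mul a b ha hb hpa hpb =>
        rw [map_mul]
        exact mul_mem hpa hpb
    let π0 := Algebra.TensorProduct.productMap R₁.val R₂.val
    have hπ0mem : ∀ z, π0 z ∈ R₁ ⊔ R₂ := by
      intro z
      have hz : π0 z ∈ π0.range := ⟨z, rfl⟩
      rwa [Algebra.TensorProduct.productMap_range, Subalgebra.range_val,
        Subalgebra.range_val] at hz
    let π : ↥R₁ ⊗[k] ↥R₂ →ₐ[k] ↥(R₁ ⊔ R₂) := π0.codRestrict _ hπ0mem
    have hπcoe : ∀ z, (π z : R) = π0 z := fun z => rfl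
    have hπs : Function.Surjective π := by
      rintro ⟨x, hx⟩
      have hx' : x ∈ π0.range := by
        rw [Algebra.TensorProduct.productMap_range, Subalgebra.range_val, Subalgebra.range_val]
        exact hx
      obtain ⟨z, hz⟩ := hx'
      exact ⟨z, Subtype.ext hz⟩
    refine ⟨hstC, etale_compositum hEt₁ hEt₂ π hπs, ?_⟩
    refine sigmaSep_compositum σk (σR.restrict R₁ R₁ hst₁) (σR.restrict R₂ R₂ hst₂)
      (σR.restrict (R₁ ⊔ R₂) (R₁ ⊔ R₂) hstC) ?_ ?_ ?_ hEt₁ hEt₂ hSep₁ hSep₂ π hπs ?_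
    · intro x
      apply Subtype.ext
      exact hcomp x
    · intro x
      apply Subtype.ext
      exact hcomp x
    · intro x
      apply Subtype.ext
      exact hcomp x
    · intro r₁ r₂
      apply Subtype.ext
      have hl : ((π ((σR.restrict R₁ R₁ hst₁) r₁ ⊗ₜ[k] (σR.restrict R₂ R₂ hst₂) r₂)) : R) =
          σR (r₁ : R) * σR (r₂ : R) := by
        rw [hπcoe]
        simp [π0, Algebra.TensorProduct.productMap_apply_tmul]
      have hr : (((σR.restrict (R₁ ⊔ R₂) (R₁ ⊔ R₂) hstC) (π (r₁ ⊗ₜ[k] r₂))) : R) =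
          σR ((r₁ : R) * (r₂ : R)) := by
        have : ((π (r₁ ⊗ₜ[k] r₂)) : R) = (r₁ : R) * (r₂ : R) := by
          rw [hπcoe]
          simp [π0, Algebra.TensorProduct.productMap_apply_tmul]
        show σR ((π (r₁ ⊗ₜ[k] r₂)) : R) = _
        rw [this]
      rw [hl, hr, map_mul]
  refine ⟨part1, ?_⟩
  set 𝒮 : Set (Subalgebra k R) := {A | IsStronglySigmaEtaleSubalgebra k R σk σR A} with h𝒮
  have hbot : (⊥ : Subalgebra k R) ∈ 𝒮 := bot_strongly_etale σk σR hcomp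
  haveI : Nonempty ↥𝒮 := ⟨⟨⊥, hbot⟩⟩
  have hdir : Directed (· ≤ ·) (fun A : ↥𝒮 => (A : Subalgebra k R)) := by
    intro A B
    exact ⟨⟨(A : Subalgebra k R) ⊔ (B : Subalgebra k R), part1 A B A.2 B.2⟩,
      le_sup_left, le_sup_right⟩
  refine ⟨⨆ A : ↥𝒮, (A : Subalgebra k R), ?_, ?_⟩
  · rw [Subalgebra.coe_iSup_of_directed hdir, Set.iUnion_coe_set]
  · intro x hx
    have hx' : x ∈ (↑(⨆ A : ↥𝒮, (A : Subalgebra k R)) : Set R) := hx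
    rw [Subalgebra.coe_iSup_of_directed hdir] at hx'
    obtain ⟨A, hA⟩ := Set.mem_iUnion.mp hx'
    obtain ⟨hstA, -, -⟩ := A.2
    exact SetLike.le_def.mp (le_iSup (fun A : ↥𝒮 => (A : Subalgebra k R)) A) (hstA x hA)
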